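/- Fix g ≥ 1. The action of Sp_{2g}(ℤ)[2] on B̂_g(ℤ) is without rotations: if M ∈ Sp_{2g}(ℤ)[2] and σ = {⟨v_0⟩,…,⟨v_k⟩} is a simplex of B̂_g(ℤ) with M(σ) = σ as a set of lax vectors, then M(⟨v_i⟩) = ⟨v_i⟩ (that is, M v_i = ±v_i) for every i. The same holds for the action of Sp_{2g}(ℤ)[2] on the subcomplex B_g(ℤ). -/

import Mathlib

open scoped BigOperators

/-- The free module `R^{2g}`. -/
abbrev SV (g : ℕ) (R : Type) [CommRing R] : Type := Fin (2*g) → R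

/-- The standard symplectic form on `R^{2g}`. -/
def symplForm (g : ℕ) (R : Type) [CommRing R] (v w : SV g R) : R :=
  ∑ i : Fin g,
    (v ⟨i.1, by have := i.isLt; omega⟩ * w ⟨g + i.1, by have := i.isLt; omega⟩ -
      v ⟨g + i.1, by have := i.isLt; omega⟩ * w ⟨i.1, by have := i.isLt; omega⟩)

/-- `(a; b)` is a symplectic basis of `R^{2g}`. -/
def IsSymplBasis (g : ℕ) (R : Type) [CommRing R] (a b : Fin g → SV g R) : Prop :=
  (∃ B : Module.Basis (Fin g ⊕ Fin g) R (SV g R),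
      (∀ i, B (Sum.inl i) = a i) ∧ (∀ i, B (Sum.inr i) = b i)) ∧
  (∀ i j, symplForm g R (a i) (a j) = 0) ∧
  (∀ i j, symplForm g R (b i) (b j) = 0) ∧
  (∀ i j, symplForm g R (a i) (b j) = if i = j then 1 else 0)

/-- `(a_1,…,a_k; b_1,…,b_l)` is a partial symplectic basis of `R^{2g}`:
it extends to a symplectic basis. -/
def IsPartialSymplBasis (g : ℕ) (R : Type) [CommRing R] {k l : ℕ}
    (a : Fin k → SV g R) (b : Fin l → SV g R) : Prop :=
  ∃ (hk : k ≤ g) (hl : l ≤ g) (A B : Fin g → SV g R), IsSymplBasis g R A B ∧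
    (∀ i, A (Fin.castLE hk i) = a i) ∧ (∀ j, B (Fin.castLE hl j) = b j)

/-- The lax vector `⟨v⟩ = {v, -v}`. -/
def lax {α : Type} [Neg α] (v : α) : Set α := {v, -v}

/-- Standard simplices of the complex of lax isotropic bases `B_g(R)`.  (The set of
vertices of a simplex.) -/
def IsStdSimplex (g : ℕ) (R : Type) [CommRing R] (σ : Set (Set (SV g R))) : Prop :=
  ∃ (k : ℕ) (a : Fin k → SV g R),
    IsPartialSymplBasis g R a (fun i : Fin 0 => i.elim0) ∧
    σ = Set.range fun i => lax (a i)

/-- Simplices of intersection type of the augmented complex `B̂_g(R)`. -/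
def IsIntSimplex (g : ℕ) (R : Type) [CommRing R] (σ : Set (Set (SV g R))) : Prop :=
  ∃ (k : ℕ) (a : Fin k → SV g R) (b : SV g R), 1 ≤ k ∧
    IsPartialSymplBasis g R a (fun _ : Fin 1 => b) ∧
    σ = insert (lax b) (Set.range fun i => lax (a i))

/-- Simplices of additive type of the augmented complex `B̂_g(R)`. -/
def IsAddSimplex (g : ℕ) (R : Type) [CommRing R] (σ : Set (Set (SV g R))) : Prop :=
  ∃ (k m : ℕ) (a : Fin k → SV g R) (ε : Fin k → R), (m = 2 ∨ m = 3) ∧ m ≤ k ∧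
    (∀ i, ε i = 1 ∨ ε i = -1) ∧
    IsPartialSymplBasis g R a (fun i : Fin 0 => i.elim0) ∧
    σ = insert (lax (∑ i : Fin k, if (i : ℕ) < m then ε i • a i else 0))
        (Set.range fun i => lax (a i))

/-- Simplices of the augmented complex of lax isotropic bases `B̂_g(R)`. -/
def IsHatSimplex (g : ℕ) (R : Type) [CommRing R] (σ : Set (Set (SV g R))) : Prop :=
  IsStdSimplex g R σ ∨ IsIntSimplex g R σ ∨ IsAddSimplex g R σ

/-- Coordinatewise reduction `ℤ^{2g} → (ℤ/2)^{2g}`. -/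
def rMap (g : ℕ) (v : SV g ℤ) : SV g (ZMod 2) := fun i => ((v i : ℤ) : ZMod 2)

/-- The reduction map on simplices, sending each lax vector `⟨v⟩` (as a set) to its image. -/
def rSimp (g : ℕ) (σ : Set (Set (SV g ℤ))) : Set (Set (SV g (ZMod 2))) :=
  (fun s => rMap g '' s) '' σ

/-- The group of `R`-linear automorphisms of `R^{2g}`. -/
abbrev SAut (g : ℕ) (R : Type) [CommRing R] : Type := (SV g R) ≃ₗ[R] (SV g R)

/-- The symplectic group `Sp_{2g}(R)`, as the subgroup of linear automorphisms of
`R^{2g}` preserving the standard symplectic form. -/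
def Sp (g : ℕ) (R : Type) [CommRing R] : Subgroup (SAut g R) where
  carrier := {M | ∀ v w, symplForm g R (M v) (M w) = symplForm g R v w}
  one_mem' := by intro v w; rfl
  mul_mem' := by
    intro M N hM hN v w
    exact (hM (N v) (N w)).trans (hN v w)
  inv_mem' := by
    intro M hM v w
    have h := hM (M.symm v) (M.symm w)
    simpa using h.symm

/-- The level 2 congruence subgroup `Sp_{2g}(ℤ)[2]`, the kernel of the reduction
`Sp_{2g}(ℤ) → Sp_{2g}(ℤ/2)`: symplectic automorphisms acting trivially mod 2. -/
def SpLevel2 (g : ℕ) : Subgroup (SAut g ℤ) where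
  carrier := {M | M ∈ Sp g ℤ ∧ ∀ v, rMap g (M v) = rMap g v}
  one_mem' := ⟨(Sp g ℤ).one_mem, fun _ => rfl⟩
  mul_mem' := by
    rintro M N ⟨hM, hM2⟩ ⟨hN, hN2⟩
    exact ⟨(Sp g ℤ).mul_mem hM hN, fun v => ((hM2 (N v)).trans (hN2 v) : _)⟩
  inv_mem' := by
    rintro M ⟨hM, hM2⟩
    refine ⟨(Sp g ℤ).inv_mem hM, fun v => ?_⟩
    have := hM2 (M.symm v)
    simp only [LinearEquiv.apply_symm_apply] at this
    exact this.symm ▸ rfl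


section AuxLemmas

variable {g : ℕ} {R : Type} [CommRing R]

lemma symplForm_zero_left (w : SV g R) : symplForm g R 0 w = 0 := by
  simp [symplForm]

lemma symplForm_sum_left {ι : Type} (s : Finset ι) (f : ι → SV g R) (w : SV g R) :
    symplForm g R (∑ i ∈ s, f i) w = ∑ i ∈ s, symplForm g R (f i) w := by
  unfold symplForm
  rw [Finset.sum_comm]
  refine Finset.sum_congr rfl fun j _ => ?_
  simp only [Finset.sum_apply, Finset.sum_mul]
  rw [← Finset.sum_sub_distrib]

lemma rMap_neg (v : SV g ℤ) : rMap g (-v) = rMap g v := by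
  funext i
  simp only [rMap, Pi.neg_apply, Int.cast_neg]
  exact CharTwo.neg_eq _

lemma rMap_zero : rMap g (0 : SV g ℤ) = 0 := by
  funext i; simp [rMap]

lemma rMap_sum {ι : Type} (s : Finset ι) (f : ι → SV g ℤ) :
    rMap g (∑ i ∈ s, f i) = ∑ i ∈ s, rMap g (f i) := by
  funext j
  simp [rMap, Finset.sum_apply]

lemma rMap_smul_sign (v : SV g ℤ) (ε : ℤ) (hε : ε = 1 ∨ ε = -1) :
    rMap g (ε • v) = rMap g v := by
  rcases hε with rfl | rfl
  · rw [one_smul]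
  · rw [neg_one_smul, rMap_neg]

lemma rMap_symplForm (v w : SV g ℤ) :
    symplForm g (ZMod 2) (rMap g v) (rMap g w) = ((symplForm g ℤ v w : ℤ) : ZMod 2) := by
  simp only [symplForm, rMap, Int.cast_sum, Int.cast_sub, Int.cast_mul]

lemma mem_lax_self {α : Type} [Neg α] (v : α) : v ∈ lax v := Or.inl rfl

lemma rMap_eq_of_lax_eq {u x : SV g ℤ} (h : lax u = lax x) : rMap g u = rMap g x := by
  have hm : u ∈ lax x := h ▸ mem_lax_self u
  rcases hm with h1 | h1
  · rw [h1]
  · rw [show u = -x from h1, rMap_neg]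

lemma image_lax (M : SAut g ℤ) (v : SV g ℤ) : (⇑M) '' lax v = lax (M v) := by
  unfold lax
  rw [Set.image_pair, map_neg]

lemma rMap_A_injective {A B : Fin g → SV g ℤ}
    (hAB : ∀ i j, symplForm g ℤ (A i) (B j) = if i = j then 1 else 0)
    {i j : Fin g} (h : rMap g (A i) = rMap g (A j)) : i = j := by
  by_contra hne
  have e1 : symplForm g (ZMod 2) (rMap g (A i)) (rMap g (B i)) = 1 := by
    rw [rMap_symplForm, hAB, if_pos rfl]; norm_num
  rw [h, rMap_symplForm, hAB, if_neg (fun e => hne e.symm)] at e1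
  norm_num at e1

lemma rMap_A_ne_B {A B : Fin g → SV g ℤ}
    (hAA : ∀ i j, symplForm g ℤ (A i) (A j) = 0)
    (hAB : ∀ i j, symplForm g ℤ (A i) (B j) = if i = j then 1 else 0)
    (i j : Fin g) : rMap g (A i) ≠ rMap g (B j) := by
  intro h
  have e0 : symplForm g (ZMod 2) (rMap g (A j)) (rMap g (A i)) = 0 := by
    rw [rMap_symplForm, hAA]; norm_num
  have e1 : symplForm g (ZMod 2) (rMap g (A j)) (rMap g (B j)) = 1 := by
    rw [rMap_symplForm, hAB, if_pos rfl]; norm_num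
  rw [h] at e0
  rw [e0] at e1
  exact one_ne_zero e1.symm

lemma rMap_addvec_ne {g k m : ℕ} (hk : k ≤ g) {A B : Fin g → SV g ℤ}
    (hAB : ∀ i j, symplForm g ℤ (A i) (B j) = if i = j then 1 else 0)
    (ε : Fin k → ℤ) (hε : ∀ i, ε i = 1 ∨ ε i = -1)
    (hm : 2 ≤ m) (hmk : m ≤ k) (j : Fin k) :
    rMap g (∑ i : Fin k, if (i : ℕ) < m then ε i • A (Fin.castLE hk i) else 0)
      ≠ rMap g (A (Fin.castLE hk j)) := by
  have hk2 : 2 ≤ k := le_trans hm hmk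
  obtain ⟨i₀, hi₀m, hi₀j⟩ : ∃ i₀ : Fin k, (i₀ : ℕ) < m ∧ i₀ ≠ j := by
    by_cases hj : (j : ℕ) = 0
    · refine ⟨⟨1, by omega⟩, (show (1:ℕ) < m by omega), ?_⟩
      intro e
      have : ((⟨1, by omega⟩ : Fin k) : ℕ) = (j : ℕ) := by rw [e]
      simp [hj] at this
    · refine ⟨⟨0, by omega⟩, (show (0:ℕ) < m by omega), ?_⟩
      intro e
      have : ((⟨0, by omega⟩ : Fin k) : ℕ) = (j : ℕ) := by rw [e]
      simp at this
      exact hj this.symm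
  intro h
  have key : symplForm g (ZMod 2)
      (rMap g (∑ i : Fin k, if (i : ℕ) < m then ε i • A (Fin.castLE hk i) else 0))
      (rMap g (B (Fin.castLE hk i₀))) = 1 := by
    rw [rMap_sum, symplForm_sum_left]
    have hterm : ∀ i : Fin k,
        symplForm g (ZMod 2)
          (rMap g (if (i : ℕ) < m then ε i • A (Fin.castLE hk i) else 0))
          (rMap g (B (Fin.castLE hk i₀))) = if i = i₀ then 1 else 0 := by
      intro i
      by_cases hc : (i : ℕ) < m
      · rw [if_pos hc, rMap_smul_sign _ _ (hε i), rMap_symplForm, hAB]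
        by_cases he : i = i₀
        · rw [if_pos (by rw [he]), if_pos he]; norm_num
        · rw [if_neg (fun e => he (Fin.castLE_injective hk e)), if_neg he]; norm_num
      · rw [if_neg hc, rMap_zero, symplForm_zero_left,
          if_neg (fun e => hc (by rw [e]; exact hi₀m))]
    rw [Finset.sum_congr rfl (fun i _ => hterm i), Finset.sum_ite_eq']
    simp
  rw [h, rMap_symplForm, hAB,
    if_neg (fun e => hi₀j (Fin.castLE_injective hk e).symm)] at key
  norm_num at key

lemma lax_sep (g : ℕ) {σ : Set (Set (SV g ℤ))} (hσ : IsHatSimplex g ℤ σ)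
    {u w : SV g ℤ} (hu : lax u ∈ σ) (hw : lax w ∈ σ) (h : rMap g u = rMap g w) :
    lax u = lax w := by
  rcases hσ with ⟨k, a, ⟨hk, hl, A, B, hAB, ha, hb⟩, rfl⟩ |
    ⟨k, a, b, hk1, ⟨hk, hl, A, B, hAB, ha, hb⟩, rfl⟩ |
    ⟨k, m, a, ε, hm23, hmk, hε, ⟨hk, hl, A, B, hAB, ha, hb⟩, rfl⟩
  · -- standard
    obtain ⟨i, hi⟩ := hu
    obtain ⟨j, hj⟩ := hw
    have hri : rMap g u = rMap g (a i) := rMap_eq_of_lax_eq hi.symm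
    have hrj : rMap g w = rMap g (a j) := rMap_eq_of_lax_eq hj.symm
    have hij : rMap g (A (Fin.castLE hk i)) = rMap g (A (Fin.castLE hk j)) := by
      rw [ha, ha, ← hri, ← hrj, h]
    have := rMap_A_injective hAB.2.2.2 hij
    rw [← hi, ← hj]
    show lax (a i) = lax (a j)
    rw [← ha i, ← ha j, this]
  · -- intersection
    have hb0 : b = B (Fin.castLE hl (0 : Fin 1)) := (hb 0).symm
    rcases hu with hu | ⟨i, hi⟩ <;> rcases hw with hw' | ⟨j, hj⟩
    · rw [hu, hw']
    · exfalso
      have hru : rMap g u = rMap g b := rMap_eq_of_lax_eq hu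
      have hrw : rMap g w = rMap g (a j) := rMap_eq_of_lax_eq hj.symm
      refine rMap_A_ne_B hAB.2.1 hAB.2.2.2 (Fin.castLE hk j) (Fin.castLE hl 0) ?_
      rw [ha, hb 0, ← hru, ← hrw, h]
    · exfalso
      have hru : rMap g u = rMap g (a i) := rMap_eq_of_lax_eq hi.symm
      have hrw : rMap g w = rMap g b := rMap_eq_of_lax_eq hw'
      refine rMap_A_ne_B hAB.2.1 hAB.2.2.2 (Fin.castLE hk i) (Fin.castLE hl 0) ?_
      rw [ha, hb 0, ← hru, ← hrw, h]
    · have hri : rMap g u = rMap g (a i) := rMap_eq_of_lax_eq hi.symm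
      have hrj : rMap g w = rMap g (a j) := rMap_eq_of_lax_eq hj.symm
      have hij : rMap g (A (Fin.castLE hk i)) = rMap g (A (Fin.castLE hk j)) := by
        rw [ha, ha, ← hri, ← hrj, h]
      have := rMap_A_injective hAB.2.2.2 hij
      rw [← hi, ← hj]
      show lax (a i) = lax (a j)
      rw [← ha i, ← ha j, this]
  · -- additive
    have hm2 : 2 ≤ m := by rcases hm23 with rfl | rfl <;> omega
    have hsum : (∑ i : Fin k, if (i : ℕ) < m then ε i • a i else 0)
        = ∑ i : Fin k, if (i : ℕ) < m then ε i • A (Fin.castLE hk i) else 0 := by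
      simp only [ha]
    rcases hu with hu | ⟨i, hi⟩ <;> rcases hw with hw' | ⟨j, hj⟩
    · rw [hu, hw']
    · exfalso
      have hru : rMap g u = rMap g (∑ i : Fin k, if (i : ℕ) < m then ε i • a i else 0) :=
        rMap_eq_of_lax_eq hu
      have hrw : rMap g w = rMap g (a j) := rMap_eq_of_lax_eq hj.symm
      refine rMap_addvec_ne hk hAB.2.2.2 ε hε hm2 hmk j ?_
      rw [← hsum, ha, ← hru, ← hrw, h]
    · exfalso
      have hru : rMap g u = rMap g (a i) := rMap_eq_of_lax_eq hi.symm
      have hrw : rMap g w = rMap g (∑ i : Fin k, if (i : ℕ) < m then ε i • a i else 0) :=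
        rMap_eq_of_lax_eq hw'
      refine rMap_addvec_ne hk hAB.2.2.2 ε hε hm2 hmk i ?_
      rw [← hsum, ha, ← hrw, ← hru, h]
    · have hri : rMap g u = rMap g (a i) := rMap_eq_of_lax_eq hi.symm
      have hrj : rMap g w = rMap g (a j) := rMap_eq_of_lax_eq hj.symm
      have hij : rMap g (A (Fin.castLE hk i)) = rMap g (A (Fin.castLE hk j)) := by
        rw [ha, ha, ← hri, ← hrj, h]
      have := rMap_A_injective hAB.2.2.2 hij
      rw [← hi, ← hj]
      show lax (a i) = lax (a j)
      rw [← ha i, ← ha j, this]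

end AuxLemmas

/-- The action of `Sp_{2g}(ℤ)[2]` on the augmented complex `B̂_g(ℤ)`
(hence also on the subcomplex `B_g(ℤ)`) is without rotations. -/
theorem spLevel2_action_without_rotations (g : ℕ) (hg : 1 ≤ g)
    (M : SAut g ℤ) (hM : M ∈ SpLevel2 g)
    (σ : Set (Set (SV g ℤ))) (hσ : IsHatSimplex g ℤ σ)
    (hfix : (fun s => (⇑M) '' s) '' σ = σ) :
    ∀ v : SV g ℤ, lax v ∈ σ → M v = v ∨ M v = -v := by
  obtain ⟨hSp, hr⟩ := hM
  intro v hv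
  have hMv : lax (M v) ∈ σ := by
    rw [← image_lax M v, ← hfix]
    exact Set.mem_image_of_mem _ hv
  have hsep : lax (M v) = lax v := lax_sep g hσ hMv hv (hr v)
  have hmem : M v ∈ lax v := hsep ▸ mem_lax_self (M v)
  rcases hmem with h1 | h1
  · exact Or.inl h1
  · exact Or.inr h1
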